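/- arXiv:0911.3350 — 2 statements merged into one kernel-verified Lean document; each statement's English description precedes it below -/
import Mathlib

section
/- Let m ≥ 2, let B be a blocker in CK(2m), and let e = {i, j} ∈ B with 0 ≤ i < j ≤ 2m−1 (taking the canonical representatives) and j − i odd. Set k = (j − i − 1)/2 and l = m − 1 − k. Then B \ {e} contains exactly k edges with both endpoints in the arc {i, i+1, …, j}, exactly l edges with both endpoints in the complementary closed arc {j, j+1, …, 2m−1} ∪ {0, 1, …, i}, and no edge of B crosses e. -/
def inArc (n : ℕ) (a b z : ZMod n) : Prop :=
  0 < (z - a).val ∧ (z - a).val < (b - a).val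

def Cross (n : ℕ) (e f : Sym2 (ZMod n)) : Prop :=
  ∃ a b c d : ZMod n, e = s(a, b) ∧ f = s(c, d) ∧
    a ≠ b ∧ a ≠ c ∧ a ≠ d ∧ b ≠ c ∧ b ≠ d ∧ c ≠ d ∧
    Xor' (inArc n a b c) (inArc n a b d)

def IsSPM (m : ℕ) (M : Finset (Sym2 (ZMod (2 * m)))) : Prop :=
  M.card = m ∧
  (∀ e ∈ M, ¬ e.IsDiag) ∧
  (∀ v : ZMod (2 * m), ∃! e, e ∈ M ∧ v ∈ e) ∧
  (∀ e ∈ M, ∀ f ∈ M, ¬ Cross (2 * m) e f)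

def IsBlockingSet (m : ℕ) (B : Set (Sym2 (ZMod (2 * m)))) : Prop :=
  (∀ e ∈ B, ¬ e.IsDiag) ∧
  ∀ M : Finset (Sym2 (ZMod (2 * m))), IsSPM m M → ∃ e ∈ M, e ∈ B

def IsBlocker (m : ℕ) (B : Finset (Sym2 (ZMod (2 * m)))) : Prop :=
  IsBlockingSet m (B : Set (Sym2 (ZMod (2 * m)))) ∧ B.card = m

def IsBoundaryEdge (m : ℕ) (e : Sym2 (ZMod (2 * m))) : Prop :=
  ∃ i : ZMod (2 * m), e = s(i, i + 1)

def edgeOrder {n : ℕ} (e : Sym2 (ZMod n)) : ℕ :=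
  Sym2.lift ⟨fun i j => min (i - j).val (j - i).val, fun i j => min_comm _ _⟩ e

def edgeSum {n : ℕ} (e : Sym2 (ZMod n)) : ZMod n :=
  Sym2.lift ⟨fun i j => i + j, fun i j => add_comm i j⟩ e
/-- linear "between" predicate in position space -/
def lbtw (p q r : ℕ) : Prop := (p < q ∧ p < r ∧ r < q) ∨ (q < p ∧ (p < r ∨ r < q))

lemma posInj {m : ℕ} {β p q : ℕ} (hp : p < 2*m) (hq : q < 2*m)
    (h : ((β + p : ℕ) : ZMod (2*m)) = ((β + q : ℕ) : ZMod (2*m))) : p = q := by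
  have : ((p : ℕ) : ZMod (2*m)) = ((q : ℕ) : ZMod (2*m)) := by
    push_cast at h ⊢
    exact add_left_cancel h
  have h2 := congrArg ZMod.val this
  rwa [ZMod.val_natCast, ZMod.val_natCast, Nat.mod_eq_of_lt hp, Nat.mod_eq_of_lt hq] at h2

lemma val_posdiff {m : ℕ} (β : ℕ) {p q : ℕ} (hp : p < 2*m) (hq : q < 2*m) :
    (((β + p : ℕ) : ZMod (2*m)) - ((β + q : ℕ) : ZMod (2*m))).val
      = if q ≤ p then p - q else 2*m - (q - p) := by
  haveI : NeZero (2*m) := ⟨by omega⟩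
  have hd : ((β + p : ℕ) : ZMod (2*m)) - ((β + q : ℕ) : ZMod (2*m))
      = ((p : ℕ) : ZMod (2*m)) - ((q : ℕ) : ZMod (2*m)) := by push_cast; ring
  rw [hd]
  by_cases hle : q ≤ p
  · rw [if_pos hle]
    have h1 : ((p : ℕ) : ZMod (2*m)) - ((q : ℕ) : ZMod (2*m)) = ((p - q : ℕ) : ZMod (2*m)) := by
      have h2 : ((p : ℕ) : ZMod (2*m)) = ((p - q : ℕ) : ZMod (2*m)) + ((q : ℕ) : ZMod (2*m)) := by
        rw [← Nat.cast_add]; congr 1; omega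
      rw [h2]; ring
    rw [h1, ZMod.val_natCast, Nat.mod_eq_of_lt (by omega)]
  · rw [if_neg hle]
    have h1 : ((p : ℕ) : ZMod (2*m)) - ((q : ℕ) : ZMod (2*m))
        = ((2*m - (q - p) : ℕ) : ZMod (2*m)) := by
      have h2 : ((q : ℕ) : ZMod (2*m)) + ((2*m - (q - p) : ℕ) : ZMod (2*m))
          = ((p : ℕ) : ZMod (2*m)) + ((2*m : ℕ) : ZMod (2*m)) := by
        rw [← Nat.cast_add, ← Nat.cast_add]; congr 1; omega
      rw [ZMod.natCast_self, add_zero] at h2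
      rw [← h2]; ring
    rw [h1, ZMod.val_natCast, Nat.mod_eq_of_lt (by omega)]

lemma inArc_iff_lbtw {m : ℕ} (β : ℕ) {p q r : ℕ} (hp : p < 2*m) (hq : q < 2*m) (hr : r < 2*m) :
    inArc (2*m) ((β + p : ℕ) : ZMod (2*m)) ((β + q : ℕ) : ZMod (2*m)) ((β + r : ℕ) : ZMod (2*m))
      ↔ lbtw p q r := by
  unfold inArc lbtw
  rw [val_posdiff β hr hp, val_posdiff β hq hp]
  split_ifs <;> omega

lemma cross_elim {m : ℕ} (β : ℕ) {p q r s : ℕ} (hp : p < 2*m) (hq : q < 2*m)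
    (hr : r < 2*m) (hs : s < 2*m)
    (h : Cross (2*m) (s(((β + p : ℕ) : ZMod (2*m)), ((β + q : ℕ) : ZMod (2*m))))
                     (s(((β + r : ℕ) : ZMod (2*m)), ((β + s : ℕ) : ZMod (2*m))))) :
    (p ≠ q ∧ p ≠ r ∧ p ≠ s ∧ q ≠ r ∧ q ≠ s ∧ r ≠ s) ∧ Xor' (lbtw p q r) (lbtw p q s) := by
  obtain ⟨a, b, c, d, he1, he2, hab, hac, had, hbc, hbd, hcd, hx⟩ := h
  rw [Sym2.eq_iff] at he1 he2
  have key : ∀ p' q' r' s' : ℕ, p' < 2*m → q' < 2*m → r' < 2*m → s' < 2*m →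
      ((β + p' : ℕ) : ZMod (2*m)) = a → ((β + q' : ℕ) : ZMod (2*m)) = b →
      ((β + r' : ℕ) : ZMod (2*m)) = c → ((β + s' : ℕ) : ZMod (2*m)) = d →
      (p' ≠ q' ∧ p' ≠ r' ∧ p' ≠ s' ∧ q' ≠ r' ∧ q' ≠ s' ∧ r' ≠ s') ∧
        Xor' (lbtw p' q' r') (lbtw p' q' s') := by
    intro p' q' r' s' hp' hq' hr' hs' ha hb hc' hd'
    subst ha hb hc' hd'
    refine ⟨⟨?_, ?_, ?_, ?_, ?_, ?_⟩, ?_⟩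
    · exact fun hh => hab (by rw [hh])
    · exact fun hh => hac (by rw [hh])
    · exact fun hh => had (by rw [hh])
    · exact fun hh => hbc (by rw [hh])
    · exact fun hh => hbd (by rw [hh])
    · exact fun hh => hcd (by rw [hh])
    · rwa [inArc_iff_lbtw β hp' hq' hr', inArc_iff_lbtw β hp' hq' hs'] at hx
  rcases he1 with ⟨ha, hb⟩ | ⟨ha, hb⟩ <;> rcases he2 with ⟨hc', hd'⟩ | ⟨hc', hd'⟩
  · exact key p q r s hp hq hr hs ha hb hc' hd'
  · obtain ⟨hds, hxx⟩ := key p q s r hp hq hs hr ha hb hd' hc'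
    unfold Xor' Xor lbtw at hxx ⊢
    omega
  · obtain ⟨hds, hxx⟩ := key q p r s hq hp hr hs hb ha hc' hd'
    unfold Xor' Xor lbtw at hxx ⊢
    omega
  · obtain ⟨hds, hxx⟩ := key q p s r hq hp hs hr hb ha hd' hc'
    unfold Xor' Xor lbtw at hxx ⊢
    omega

def piTR (A C M t : ℕ) : ℕ :=
  if t < A then A - 1 - t else if t < C then A + C - 1 - t else C + M - 1 - t

lemma piTR_dom {A C M : ℕ} (hA : 2 ∣ A) (hC : 2 ∣ C) (hAC : A ≤ C) (hCM : C ≤ M) (hM : 2 ∣ M) :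
    ∀ t, t < M → piTR A C M t < M := by
  intro t ht; unfold piTR; split_ifs <;> omega

lemma piTR_inv {A C M : ℕ} (hA : 2 ∣ A) (hC : 2 ∣ C) (hAC : A ≤ C) (hCM : C ≤ M) (hM : 2 ∣ M) :
    ∀ t, t < M → piTR A C M (piTR A C M t) = t := by
  intro t ht; unfold piTR; split_ifs <;> omega

lemma piTR_ne {A C M : ℕ} (hA : 2 ∣ A) (hC : 2 ∣ C) (hAC : A ≤ C) (hCM : C ≤ M) (hM : 2 ∣ M) :
    ∀ t, t < M → piTR A C M t ≠ t := by
  intro t ht; unfold piTR; split_ifs <;> omega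

lemma piTR_nc {A C M : ℕ} (hA : 2 ∣ A) (hC : 2 ∣ C) (hAC : A ≤ C) (hCM : C ≤ M) (hM : 2 ∣ M) :
    ∀ t u, t < M → u < M → t < u → u < piTR A C M t → piTR A C M t < piTR A C M u → False := by
  intro t u ht hu h1 h2 h3; unfold piTR at h2 h3; split_ifs at h2 h3 <;> omega

def wmatch (m base : ℕ) (π : ℕ → ℕ) : Finset (Sym2 (ZMod (2*m))) :=
  (Finset.range (2*m)).image
    (fun t => s(((base + t : ℕ) : ZMod (2*m)), ((base + π t : ℕ) : ZMod (2*m))))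

theorem wmatch_spm (m base : ℕ) (hm : 0 < m) (π : ℕ → ℕ)
    (hdom : ∀ t, t < 2*m → π t < 2*m)
    (hinv : ∀ t, t < 2*m → π (π t) = t)
    (hne  : ∀ t, t < 2*m → π t ≠ t)
    (hnc  : ∀ t u, t < 2*m → u < 2*m → t < u → u < π t → π t < π u → False) :
    IsSPM m (wmatch m base π) := by
  haveI : NeZero (2*m) := ⟨by omega⟩
  set F : ℕ → Sym2 (ZMod (2*m)) :=
    fun t => s(((base + t : ℕ) : ZMod (2*m)), ((base + π t : ℕ) : ZMod (2*m))) with hF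
  have hFcomm : ∀ t, t < 2*m → F (π t) = F t := by
    intro t ht
    simp only [hF, hinv t ht]
    exact Sym2.eq_swap
  have hmem : ∀ g, g ∈ wmatch m base π ↔ ∃ t, t < 2*m ∧ g = F t := by
    intro g
    simp only [wmatch, Finset.mem_image, Finset.mem_range, hF]
    constructor
    · rintro ⟨t, ht, rfl⟩; exact ⟨t, ht, rfl⟩
    · rintro ⟨t, ht, rfl⟩; exact ⟨t, ht, rfl⟩
  refine ⟨?_, ?_, ?_, ?_⟩
  · -- card
    have hS : wmatch m base π =
        ((Finset.range (2*m)).filter (fun t => t < π t)).image F := by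
      apply Finset.Subset.antisymm
      · intro g hg
        rw [hmem] at hg
        obtain ⟨t, ht, rfl⟩ := hg
        rcases lt_or_gt_of_ne (hne t ht).symm with h1 | h1
        · exact Finset.mem_image_of_mem F
            (by simp only [Finset.mem_filter, Finset.mem_range]; exact ⟨ht, h1⟩)
        · rw [← hFcomm t ht]
          refine Finset.mem_image_of_mem F ?_
          simp only [Finset.mem_filter, Finset.mem_range]
          refine ⟨hdom t ht, ?_⟩
          rw [hinv t ht]; omega
      · intro g hg
        obtain ⟨t, ht, rfl⟩ := Finset.mem_image.mp hg
        simp only [Finset.mem_filter, Finset.mem_range] at ht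
        rw [hmem]; exact ⟨t, ht.1, rfl⟩
    rw [hS]
    have hinj : Set.InjOn F ((Finset.range (2*m)).filter (fun t => t < π t)) := by
      intro t ht u hu heq
      simp only [Finset.coe_filter, Finset.mem_range, Set.mem_setOf_eq] at ht hu
      simp only [hF, Sym2.eq_iff] at heq
      have hd1 := hdom t ht.1
      have hd2 := hdom u hu.1
      rcases heq with ⟨h1, h2⟩ | ⟨h1, h2⟩
      · exact posInj (by omega) (by omega) h1
      · have e1 : t = π u := posInj (by omega) (by omega) (m := m) h1
        have e2 : π t = u := posInj (by omega) (by omega) (m := m) h2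
        omega
    rw [Finset.card_image_of_injOn hinj]
    have hTeq : (Finset.range (2*m)).filter (fun t => π t < t)
        = (Finset.range (2*m)).filter (fun t => ¬ t < π t) := by
      apply Finset.filter_congr
      intro t ht
      simp only [Finset.mem_range] at ht
      have := hne t ht
      constructor <;> intro <;> omega
    have hcards : ((Finset.range (2*m)).filter (fun t => t < π t)).card
        = ((Finset.range (2*m)).filter (fun t => π t < t)).card := by
      apply Finset.card_bij (fun t _ => π t)
      · intro t ht
        simp only [Finset.mem_filter, Finset.mem_range] at ht ⊢
        refine ⟨hdom t ht.1, ?_⟩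
        rw [hinv t ht.1]; omega
      · intro t ht u hu heq
        simp only [Finset.mem_filter, Finset.mem_range] at ht hu
        have h1 := hinv t ht.1; have h2 := hinv u hu.1
        rw [← h1, ← h2, heq]
      · intro u hu
        simp only [Finset.mem_filter, Finset.mem_range] at hu
        refine ⟨π u, ?_, hinv u hu.1⟩
        simp only [Finset.mem_filter, Finset.mem_range]
        refine ⟨hdom u hu.1, ?_⟩
        rw [hinv u hu.1]; omega
    have hsum := Finset.card_filter_add_card_filter_not
      (s := Finset.range (2*m)) (p := fun t => t < π t)
    rw [Finset.card_range] at hsum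
    rw [← hTeq] at hsum
    omega
  · -- no diag
    intro g hg
    rw [hmem g] at hg
    obtain ⟨t, ht, rfl⟩ := hg
    simp only [hF, Sym2.mk_isDiag_iff]
    intro heq
    exact hne t ht (posInj ht (hdom t ht) heq).symm
  · -- partition
    intro v
    set t := (v - (base : ZMod (2*m))).val with htdef
    have htlt : t < 2*m := ZMod.val_lt _
    have hv : v = ((base + t : ℕ) : ZMod (2*m)) := by
      push_cast
      rw [htdef]
      rw [ZMod.natCast_val, ZMod.cast_id]
      ring
    refine ⟨F t, ⟨(hmem _).mpr ⟨t, htlt, rfl⟩, ?_⟩, ?_⟩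
    · rw [hv]; simp only [hF]; exact Sym2.mem_mk_left _ _
    · rintro g ⟨hg, hvg⟩
      rw [hmem] at hg
      obtain ⟨u, hu, rfl⟩ := hg
      simp only [hF, Sym2.mem_iff] at hvg
      rcases hvg with h1 | h1
      · have : t = u := by
          apply posInj htlt hu
          rw [← hv, h1]
        rw [this]
      · have : t = π u := by
          apply posInj htlt (hdom u hu)
          rw [← hv, h1]
        rw [← hFcomm u hu, ← this]
  · -- non-crossing
    intro g1 hg1 g2 hg2 hc
    rw [hmem] at hg1 hg2
    obtain ⟨t0, ht0, rfl⟩ := hg1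
    obtain ⟨u0, hu0, rfl⟩ := hg2
    -- normalize
    obtain ⟨t, ht, htn, hFt⟩ : ∃ t, t < 2*m ∧ t < π t ∧ F t = F t0 := by
      rcases lt_or_gt_of_ne (hne t0 ht0).symm with h1 | h1
      · exact ⟨t0, ht0, h1, rfl⟩
      · refine ⟨π t0, hdom t0 ht0, ?_, hFcomm t0 ht0⟩
        rw [hinv t0 ht0]; omega
    obtain ⟨u, hu, hun, hFu⟩ : ∃ u, u < 2*m ∧ u < π u ∧ F u = F u0 := by
      rcases lt_or_gt_of_ne (hne u0 hu0).symm with h1 | h1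
      · exact ⟨u0, hu0, h1, rfl⟩
      · refine ⟨π u0, hdom u0 hu0, ?_, hFcomm u0 hu0⟩
        rw [hinv u0 hu0]; omega
    rw [← hFt, ← hFu] at hc
    obtain ⟨hds, hxx⟩ := cross_elim base ht (hdom t ht) hu (hdom u hu) hc
    have hn1 : ¬ (t < u ∧ u < π t ∧ π t < π u) := fun ⟨h1, h2, h3⟩ => hnc t u ht hu h1 h2 h3
    have hn2 : ¬ (u < t ∧ t < π u ∧ π u < π t) := fun ⟨h1, h2, h3⟩ => hnc u t hu ht h1 h2 h3
    unfold Xor' Xor lbtw at hxx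
    omega

variable {m : ℕ}

lemma natCastInj {p q : ℕ} (hp : p < 2*m) (hq : q < 2*m)
    (h : ((p : ℕ) : ZMod (2*m)) = ((q : ℕ) : ZMod (2*m))) : p = q := by
  apply posInj (β := 0) hp hq
  simpa using h

lemma wmatch_mem {base : ℕ} {π : ℕ → ℕ} {g : Sym2 (ZMod (2*m))} :
    g ∈ wmatch m base π ↔ ∃ t, t < 2*m ∧
      g = s(((base + t : ℕ) : ZMod (2*m)), ((base + π t : ℕ) : ZMod (2*m))) := by
  simp only [wmatch, Finset.mem_image, Finset.mem_range]
  constructor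
  · rintro ⟨t, ht, rfl⟩; exact ⟨t, ht, rfl⟩
  · rintro ⟨t, ht, rfl⟩; exact ⟨t, ht, rfl⟩

lemma edgeSum_mk (x y : ZMod (2*m)) : edgeSum s(x, y) = x + y := rfl

lemma sum_injOn (hm : 2 ≤ m) (B : Finset (Sym2 (ZMod (2*m)))) (hB : IsBlocker m B) :
    Set.InjOn edgeSum (B : Set (Sym2 (ZMod (2*m)))) := by
  have hmeet : ∀ s : ℕ, s < m → ∃ g ∈ B, edgeSum g = ((2*s+1 : ℕ) : ZMod (2*m)) := by
    intro s hs
    have hspm := wmatch_spm m (s+1) (by omega) (piTR 0 0 (2*m))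
      (piTR_dom (by omega) (by omega) (by omega) (by omega) (by omega))
      (piTR_inv (by omega) (by omega) (by omega) (by omega) (by omega))
      (piTR_ne (by omega) (by omega) (by omega) (by omega) (by omega))
      (piTR_nc (by omega) (by omega) (by omega) (by omega) (by omega))
    obtain ⟨g, hgM, hgB⟩ := hB.1.2 _ hspm
    refine ⟨g, hgB, ?_⟩
    obtain ⟨t, ht, rfl⟩ := wmatch_mem.mp hgM
    have hπ : piTR 0 0 (2*m) t = 2*m - 1 - t := by
      unfold piTR; split_ifs <;> omega
    rw [edgeSum_mk, hπ, ← Nat.cast_add]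
    have harith : (s + 1 + t) + (s + 1 + (2*m - 1 - t)) = (2*s+1) + 2*m := by omega
    rw [harith, Nat.cast_add, ZMod.natCast_self, add_zero]
  classical
  have hodds_sub : (Finset.range m).image (fun s => ((2*s+1 : ℕ) : ZMod (2*m)))
      ⊆ B.image edgeSum := by
    intro c hc
    simp only [Finset.mem_image, Finset.mem_range] at hc ⊢
    obtain ⟨s, hs, rfl⟩ := hc
    obtain ⟨g, hg, hsum⟩ := hmeet s hs
    exact ⟨g, hg, hsum⟩
  have hodds_card : ((Finset.range m).image (fun s => ((2*s+1 : ℕ) : ZMod (2*m)))).card = m := by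
    rw [Finset.card_image_of_injOn, Finset.card_range]
    intro s hs s' hs' h
    simp only [Finset.coe_range, Set.mem_Iio] at hs hs'
    have := natCastInj (p := 2*s+1) (q := 2*s'+1) (by omega) (by omega) h
    omega
  have h1 : (B.image edgeSum).card ≤ m := le_trans Finset.card_image_le (le_of_eq hB.2)
  have h2 := Finset.eq_of_subset_of_card_le hodds_sub (by omega)
  apply Finset.injOn_of_card_image_eq
  rw [← h2, hodds_card, hB.2]

-- Step B: existence of enough edges on each closed side
lemma outEdges (hm : 2 ≤ m) (B : Finset (Sym2 (ZMod (2*m)))) (hB : IsBlocker m B)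
    (i j K L : ℕ) (hij : i < j) (hj : j ≤ 2*m - 1) (hK : j = i + (2*K+1)) (hKL : m = K + L + 1)
    (he : s((i : ZMod (2*m)), (j : ZMod (2*m))) ∈ B)
    (hsumInj : Set.InjOn edgeSum (B : Set (Sym2 (ZMod (2*m)))))
    (d : ℕ) (hd1 : 1 ≤ d) (hd2 : d ≤ L) :
    ∃ g, g ∈ B ∧ g ≠ s((i : ZMod (2*m)), (j : ZMod (2*m))) ∧
      (∃ t u : ℕ, t ≤ 2*L+1 ∧ u ≤ 2*L+1 ∧
        g = s(((j + t : ℕ) : ZMod (2*m)), ((j + u : ℕ) : ZMod (2*m))) ∧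
        (t + u = 2*d - 1 ∨ t + u = 2*L + 2*d + 1)) := by
  have hL1 : i + 2*m = j + (2*L+1) := by omega
  have hspm := wmatch_spm m j (by omega) (piTR (2*d) (2*L+2) (2*m))
    (piTR_dom (by omega) (by omega) (by omega) (by omega) (by omega))
    (piTR_inv (by omega) (by omega) (by omega) (by omega) (by omega))
    (piTR_ne (by omega) (by omega) (by omega) (by omega) (by omega))
    (piTR_nc (by omega) (by omega) (by omega) (by omega) (by omega))
  obtain ⟨g, hgM, hgB⟩ := hB.1.2 _ hspm
  obtain ⟨t, ht, rfl⟩ := wmatch_mem.mp hgM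
  set π := piTR (2*d) (2*L+2) (2*m) with hπdef
  have hπt : π t < 2*m := piTR_dom (by omega) (by omega) (by omega) (by omega) (by omega) t ht
  -- e in position form : e = s(↑(j+0), ↑(j+(2L+1)))
  have hecast : s((i : ZMod (2*m)), (j : ZMod (2*m)))
      = s(((j + 0 : ℕ) : ZMod (2*m)), ((j + (2*L+1) : ℕ) : ZMod (2*m))) := by
    have h1 : ((j + (2*L+1) : ℕ) : ZMod (2*m)) = ((i : ℕ) : ZMod (2*m)) := by
      rw [← hL1, Nat.cast_add, ZMod.natCast_self, add_zero]
    rw [h1]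
    rw [Nat.add_zero]
    exact Sym2.eq_swap
  -- third block impossible
  have hblock3 : ¬ (2*L+2 ≤ t) := by
    intro hge
    have hπt3 : π t = 2*L+2 + 2*m - 1 - t := by
      simp only [hπdef]; unfold piTR; split_ifs <;> omega
    have hsum : edgeSum (s(((j + t : ℕ) : ZMod (2*m)), ((j + π t : ℕ) : ZMod (2*m))))
        = edgeSum (s((i : ZMod (2*m)), (j : ZMod (2*m)))) := by
      rw [edgeSum_mk, hecast, edgeSum_mk, ← Nat.cast_add, ← Nat.cast_add]
      have : (j + t) + (j + π t) = ((j + 0) + (j + (2*L+1))) + 2*m := by omega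
      rw [this, Nat.cast_add, ZMod.natCast_self, add_zero]
    have heq := hsumInj hgB he hsum
    rw [hecast] at heq
    rw [Sym2.eq_iff] at heq
    rcases heq with ⟨h1, h2⟩ | ⟨h1, h2⟩
    · have := posInj ht (by omega) (m := m) h1; omega
    · have := posInj ht (by omega) (m := m) h1; omega
  have htlt : t < 2*L+2 := by omega
  have hπlt : π t < 2*L+2 := by
    simp only [hπdef]; unfold piTR; split_ifs <;> omega
  have hsum2 : t + π t = 2*d-1 ∨ t + π t = 2*L + 2*d + 1 := by
    simp only [hπdef]; unfold piTR; split_ifs <;> omega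
  refine ⟨_, hgB, ?_, ⟨t, π t, by omega, by omega, rfl, hsum2⟩⟩
  -- g ≠ e
  intro heq
  rw [hecast] at heq
  rw [Sym2.eq_iff] at heq
  rcases heq with ⟨h1, h2⟩ | ⟨h1, h2⟩
  · have e1 := posInj ht (by omega) (m := m) h1
    have e2 := posInj hπt (by omega) (m := m) h2
    omega
  · have e1 := posInj ht (by omega) (m := m) h1
    have e2 := posInj hπt (by omega) (m := m) h2
    omega

lemma inEdges (hm : 2 ≤ m) (B : Finset (Sym2 (ZMod (2*m)))) (hB : IsBlocker m B)
    (i j K L : ℕ) (hij : i < j) (hj : j ≤ 2*m - 1) (hK : j = i + (2*K+1)) (hKL : m = K + L + 1)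
    (he : s((i : ZMod (2*m)), (j : ZMod (2*m))) ∈ B)
    (hsumInj : Set.InjOn edgeSum (B : Set (Sym2 (ZMod (2*m)))))
    (d : ℕ) (hd1 : 1 ≤ d) (hd2 : d ≤ K) :
    ∃ g, g ∈ B ∧ g ≠ s((i : ZMod (2*m)), (j : ZMod (2*m))) ∧
      (∃ t u : ℕ, t ≤ 2*K+1 ∧ u ≤ 2*K+1 ∧
        g = s(((i + t : ℕ) : ZMod (2*m)), ((i + u : ℕ) : ZMod (2*m))) ∧
        (t + u = 2*d - 1 ∨ t + u = 2*K + 2*d + 1)) := by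
  have hspm := wmatch_spm m i (by omega) (piTR (2*d) (2*K+2) (2*m))
    (piTR_dom (by omega) (by omega) (by omega) (by omega) (by omega))
    (piTR_inv (by omega) (by omega) (by omega) (by omega) (by omega))
    (piTR_ne (by omega) (by omega) (by omega) (by omega) (by omega))
    (piTR_nc (by omega) (by omega) (by omega) (by omega) (by omega))
  obtain ⟨g, hgM, hgB⟩ := hB.1.2 _ hspm
  obtain ⟨t, ht, rfl⟩ := wmatch_mem.mp hgM
  set π := piTR (2*d) (2*K+2) (2*m) with hπdef
  have hπt : π t < 2*m := piTR_dom (by omega) (by omega) (by omega) (by omega) (by omega) t ht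
  have hecast : s((i : ZMod (2*m)), (j : ZMod (2*m)))
      = s(((i + 0 : ℕ) : ZMod (2*m)), ((i + (2*K+1) : ℕ) : ZMod (2*m))) := by
    rw [Nat.add_zero, show i + (2*K+1) = j from by omega]
  have hblock3 : ¬ (2*K+2 ≤ t) := by
    intro hge
    have hπt3 : π t = 2*K+2 + 2*m - 1 - t := by
      simp only [hπdef]; unfold piTR; split_ifs <;> omega
    have hsum : edgeSum (s(((i + t : ℕ) : ZMod (2*m)), ((i + π t : ℕ) : ZMod (2*m))))
        = edgeSum (s((i : ZMod (2*m)), (j : ZMod (2*m)))) := by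
      rw [edgeSum_mk, hecast, edgeSum_mk, ← Nat.cast_add, ← Nat.cast_add]
      have : (i + t) + (i + π t) = ((i + 0) + (i + (2*K+1))) + 2*m := by omega
      rw [this, Nat.cast_add, ZMod.natCast_self, add_zero]
    have heq := hsumInj hgB he hsum
    rw [hecast] at heq
    rw [Sym2.eq_iff] at heq
    rcases heq with ⟨h1, h2⟩ | ⟨h1, h2⟩
    · have := posInj ht (by omega) (m := m) h1; omega
    · have := posInj ht (by omega) (m := m) h1; omega
  have htlt : t < 2*K+2 := by omega
  have hπlt : π t < 2*K+2 := by
    simp only [hπdef]; unfold piTR; split_ifs <;> omega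
  have hsum2 : t + π t = 2*d-1 ∨ t + π t = 2*K + 2*d + 1 := by
    simp only [hπdef]; unfold piTR; split_ifs <;> omega
  refine ⟨_, hgB, ?_, ⟨t, π t, by omega, by omega, rfl, hsum2⟩⟩
  intro heq
  rw [hecast] at heq
  rw [Sym2.eq_iff] at heq
  rcases heq with ⟨h1, h2⟩ | ⟨h1, h2⟩
  · have e1 := posInj ht (by omega) (m := m) h1
    have e2 := posInj hπt (by omega) (m := m) h2
    omega
  · have e1 := posInj ht (by omega) (m := m) h1
    have e2 := posInj hπt (by omega) (m := m) h2
    omega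

lemma ncard_out_ge (hm : 2 ≤ m) (B : Finset (Sym2 (ZMod (2*m)))) (hB : IsBlocker m B)
    (i j K L : ℕ) (hij : i < j) (hj : j ≤ 2*m - 1) (hK : j = i + (2*K+1)) (hKL : m = K + L + 1)
    (he : s((i : ZMod (2*m)), (j : ZMod (2*m))) ∈ B)
    (hsumInj : Set.InjOn edgeSum (B : Set (Sym2 (ZMod (2*m))))) :
    L ≤ {g : Sym2 (ZMod (2*m)) | g ∈ B ∧ g ≠ s((i : ZMod (2*m)), (j : ZMod (2*m))) ∧
        ∀ v ∈ g, ∃ a : ℕ, a ≤ 2*m - 1 ∧ (j ≤ a ∨ a ≤ i) ∧ v = (a : ZMod (2*m))}.ncard := by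
  classical
  set OS := {g : Sym2 (ZMod (2*m)) | g ∈ B ∧ g ≠ s((i : ZMod (2*m)), (j : ZMod (2*m))) ∧
        ∀ v ∈ g, ∃ a : ℕ, a ≤ 2*m - 1 ∧ (j ≤ a ∨ a ≤ i) ∧ v = (a : ZMod (2*m))} with hOS
  have hOfin : OS.Finite := Set.Finite.subset B.finite_toSet (fun g hg => hg.1)
  have H' : ∀ d : ℕ, ∃ g : Sym2 (ZMod (2*m)), (1 ≤ d ∧ d ≤ L) →
      (g ∈ OS ∧ ∃ t u : ℕ, t ≤ 2*L+1 ∧ u ≤ 2*L+1 ∧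
        g = s(((j + t : ℕ) : ZMod (2*m)), ((j + u : ℕ) : ZMod (2*m))) ∧
        (t + u = 2*d - 1 ∨ t + u = 2*L + 2*d + 1)) := by
    intro d
    by_cases hd : 1 ≤ d ∧ d ≤ L
    · obtain ⟨g, hgB, hgne, t, u, ht, hu, hgeq, hsum⟩ :=
        outEdges hm B hB i j K L hij hj hK hKL he hsumInj d hd.1 hd.2
      refine ⟨g, fun _ => ⟨?_, t, u, ht, hu, hgeq, hsum⟩⟩
      rw [hOS]
      refine ⟨hgB, hgne, ?_⟩
      intro v hv
      rw [hgeq, Sym2.mem_iff] at hv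
      have key : ∀ p : ℕ, p ≤ 2*L+1 → ∃ a : ℕ, a ≤ 2*m - 1 ∧ (j ≤ a ∨ a ≤ i) ∧
          ((j + p : ℕ) : ZMod (2*m)) = (a : ZMod (2*m)) := by
        intro p hp
        by_cases hc : j + p ≤ 2*m - 1
        · exact ⟨j + p, hc, Or.inl (by omega), rfl⟩
        · set a := j + p - 2*m with hadef
          refine ⟨a, by omega, Or.inr (by omega), ?_⟩
          have ha : j + p = a + 2*m := by omega
          rw [ha, Nat.cast_add, ZMod.natCast_self, add_zero]
      rcases hv with rfl | rfl
      · obtain ⟨a, h1, h2, h3⟩ := key t ht; exact ⟨a, h1, h2, h3⟩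
      · obtain ⟨a, h1, h2, h3⟩ := key u hu; exact ⟨a, h1, h2, h3⟩
    · exact ⟨s(0, 0), fun hc => (hd hc).elim⟩
  choose f hf using H'
  have hinj : Set.InjOn f (Finset.Icc 1 L) := by
    intro d hd d' hd' heq
    simp only [Finset.coe_Icc, Set.mem_Icc] at hd hd'
    obtain ⟨_, t, u, ht, hu, hgeq, hsum⟩ := hf d hd
    obtain ⟨_, t', u', ht', hu', hgeq', hsum'⟩ := hf d' hd'
    rw [heq, hgeq'] at hgeq
    rw [Sym2.eq_iff] at hgeq
    rcases hgeq with ⟨h1, h2⟩ | ⟨h1, h2⟩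
    · have e1 := posInj (m := m) (by omega) (by omega) h1
      have e2 := posInj (m := m) (by omega) (by omega) h2
      omega
    · have e1 := posInj (m := m) (by omega) (by omega) h1
      have e2 := posInj (m := m) (by omega) (by omega) h2
      omega
  have hsub : ↑((Finset.Icc 1 L).image f) ⊆ OS := by
    intro g hg
    simp only [Finset.coe_image, Set.mem_image, Finset.coe_Icc, Set.mem_Icc] at hg
    obtain ⟨d, hd, rfl⟩ := hg
    exact (hf d hd).1
  calc L = ((Finset.Icc 1 L).image f).card := by
        rw [Finset.card_image_of_injOn (by simpa using hinj), Nat.card_Icc]; omega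
    _ = (↑((Finset.Icc 1 L).image f) : Set _).ncard := (Set.ncard_coe_finset _).symm
    _ ≤ OS.ncard := Set.ncard_le_ncard hsub hOfin

lemma ncard_in_ge (hm : 2 ≤ m) (B : Finset (Sym2 (ZMod (2*m)))) (hB : IsBlocker m B)
    (i j K L : ℕ) (hij : i < j) (hj : j ≤ 2*m - 1) (hK : j = i + (2*K+1)) (hKL : m = K + L + 1)
    (he : s((i : ZMod (2*m)), (j : ZMod (2*m))) ∈ B)
    (hsumInj : Set.InjOn edgeSum (B : Set (Sym2 (ZMod (2*m))))) :
    K ≤ {g : Sym2 (ZMod (2*m)) | g ∈ B ∧ g ≠ s((i : ZMod (2*m)), (j : ZMod (2*m))) ∧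
        ∀ v ∈ g, ∃ a : ℕ, i ≤ a ∧ a ≤ j ∧ v = (a : ZMod (2*m))}.ncard := by
  classical
  set IS := {g : Sym2 (ZMod (2*m)) | g ∈ B ∧ g ≠ s((i : ZMod (2*m)), (j : ZMod (2*m))) ∧
        ∀ v ∈ g, ∃ a : ℕ, i ≤ a ∧ a ≤ j ∧ v = (a : ZMod (2*m))} with hIS
  have hIfin : IS.Finite := Set.Finite.subset B.finite_toSet (fun g hg => hg.1)
  have H' : ∀ d : ℕ, ∃ g : Sym2 (ZMod (2*m)), (1 ≤ d ∧ d ≤ K) →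
      (g ∈ IS ∧ ∃ t u : ℕ, t ≤ 2*K+1 ∧ u ≤ 2*K+1 ∧
        g = s(((i + t : ℕ) : ZMod (2*m)), ((i + u : ℕ) : ZMod (2*m))) ∧
        (t + u = 2*d - 1 ∨ t + u = 2*K + 2*d + 1)) := by
    intro d
    by_cases hd : 1 ≤ d ∧ d ≤ K
    · obtain ⟨g, hgB, hgne, t, u, ht, hu, hgeq, hsum⟩ :=
        inEdges hm B hB i j K L hij hj hK hKL he hsumInj d hd.1 hd.2
      refine ⟨g, fun _ => ⟨?_, t, u, ht, hu, hgeq, hsum⟩⟩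
      rw [hIS]
      refine ⟨hgB, hgne, ?_⟩
      intro v hv
      rw [hgeq, Sym2.mem_iff] at hv
      rcases hv with rfl | rfl
      · exact ⟨i + t, by omega, by omega, rfl⟩
      · exact ⟨i + u, by omega, by omega, rfl⟩
    · exact ⟨s(0, 0), fun hc => (hd hc).elim⟩
  choose f hf using H'
  have hinj : Set.InjOn f (Finset.Icc 1 K) := by
    intro d hd d' hd' heq
    simp only [Finset.coe_Icc, Set.mem_Icc] at hd hd'
    obtain ⟨_, t, u, ht, hu, hgeq, hsum⟩ := hf d hd
    obtain ⟨_, t', u', ht', hu', hgeq', hsum'⟩ := hf d' hd'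
    rw [heq, hgeq'] at hgeq
    rw [Sym2.eq_iff] at hgeq
    rcases hgeq with ⟨h1, h2⟩ | ⟨h1, h2⟩
    · have e1 := posInj (m := m) (by omega) (by omega) h1
      have e2 := posInj (m := m) (by omega) (by omega) h2
      omega
    · have e1 := posInj (m := m) (by omega) (by omega) h1
      have e2 := posInj (m := m) (by omega) (by omega) h2
      omega
  have hsub : ↑((Finset.Icc 1 K).image f) ⊆ IS := by
    intro g hg
    simp only [Finset.coe_image, Set.mem_image, Finset.coe_Icc, Set.mem_Icc] at hg
    obtain ⟨d, hd, rfl⟩ := hg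
    exact (hf d hd).1
  calc K = ((Finset.Icc 1 K).image f).card := by
        rw [Finset.card_image_of_injOn (by simpa using hinj), Nat.card_Icc]; omega
    _ = (↑((Finset.Icc 1 K).image f) : Set _).ncard := (Set.ncard_coe_finset _).symm
    _ ≤ IS.ncard := Set.ncard_le_ncard hsub hIfin

lemma sym2_exists {α : Type*} (g : Sym2 α) : ∃ x y, g = s(x, y) := by
  induction g using Sym2.ind with
  | _ x y => exact ⟨x, y, rfl⟩

lemma noCross_in (hm : 2 ≤ m) (i j K : ℕ) (hij : i < j) (hj : j ≤ 2*m - 1)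
    (hK : j = i + (2*K+1)) (x y : ZMod (2*m))
    (hx : ∃ a : ℕ, i ≤ a ∧ a ≤ j ∧ x = (a : ZMod (2*m)))
    (hy : ∃ a : ℕ, i ≤ a ∧ a ≤ j ∧ y = (a : ZMod (2*m))) :
    ¬ Cross (2*m) (s(x, y)) (s((i : ZMod (2*m)), (j : ZMod (2*m)))) := by
  obtain ⟨a, ha1, ha2, rfl⟩ := hx
  obtain ⟨b, hb1, hb2, rfl⟩ := hy
  intro hC
  have hxa : ((a : ℕ) : ZMod (2*m)) = ((i + (a - i) : ℕ) : ZMod (2*m)) := by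
    congr 1; omega
  have hxb : ((b : ℕ) : ZMod (2*m)) = ((i + (b - i) : ℕ) : ZMod (2*m)) := by
    congr 1; omega
  have hxi : ((i : ℕ) : ZMod (2*m)) = ((i + 0 : ℕ) : ZMod (2*m)) := by congr 1 <;> omega
  have hxj : ((j : ℕ) : ZMod (2*m)) = ((i + (2*K+1) : ℕ) : ZMod (2*m)) := by congr 1 <;> omega
  rw [hxa, hxb, hxi, hxj] at hC
  obtain ⟨hds, hxx⟩ := cross_elim i (by omega) (by omega) (by omega) (by omega) hC
  unfold Xor' Xor lbtw at hxx
  omega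

lemma noCross_out (hm : 2 ≤ m) (i j K L : ℕ) (hij : i < j) (hj : j ≤ 2*m - 1)
    (hK : j = i + (2*K+1)) (hKL : m = K + L + 1) (x y : ZMod (2*m))
    (hx : ∃ a : ℕ, a ≤ 2*m - 1 ∧ (j ≤ a ∨ a ≤ i) ∧ x = (a : ZMod (2*m)))
    (hy : ∃ a : ℕ, a ≤ 2*m - 1 ∧ (j ≤ a ∨ a ≤ i) ∧ y = (a : ZMod (2*m))) :
    ¬ Cross (2*m) (s(x, y)) (s((i : ZMod (2*m)), (j : ZMod (2*m)))) := by
  obtain ⟨a, ha1, ha2, rfl⟩ := hx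
  obtain ⟨b, hb1, hb2, rfl⟩ := hy
  intro hC
  -- positions relative to base j
  have key : ∀ c : ℕ, c ≤ 2*m-1 → (j ≤ c ∨ c ≤ i) →
      ∃ p : ℕ, p ≤ 2*L+1 ∧ ((c : ℕ) : ZMod (2*m)) = ((j + p : ℕ) : ZMod (2*m)) := by
    intro c hc1 hc2
    rcases hc2 with h | h
    · exact ⟨c - j, by omega, by congr 1 <;> omega⟩
    · refine ⟨c + 2*m - j, by omega, ?_⟩
      have : j + (c + 2*m - j) = c + 2*m := by omega
      rw [this, Nat.cast_add, ZMod.natCast_self, add_zero]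
  obtain ⟨p, hp, hpe⟩ := key a ha1 ha2
  obtain ⟨q, hq, hqe⟩ := key b hb1 hb2
  have hxi : ((i : ℕ) : ZMod (2*m)) = ((j + (2*L+1) : ℕ) : ZMod (2*m)) := by
    have : j + (2*L+1) = i + 2*m := by omega
    rw [this, Nat.cast_add, ZMod.natCast_self, add_zero]
  have hxj : ((j : ℕ) : ZMod (2*m)) = ((j + 0 : ℕ) : ZMod (2*m)) := by congr 1 <;> omega
  rw [hpe, hqe, hxi, hxj] at hC
  obtain ⟨hds, hxx⟩ := cross_elim j (by omega) (by omega) (by omega) (by omega) hC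
  unfold Xor' Xor lbtw at hxx
  omega

lemma noCross_self (n : ℕ) (g : Sym2 (ZMod n)) : ¬ Cross n g g := by
  intro hC
  obtain ⟨a, b, c, d, h1, h2, hab, hac, had, hbc, hbd, hcd, hx⟩ := hC
  rw [h1, Sym2.eq_iff] at h2
  rcases h2 with ⟨hh1, hh2⟩ | ⟨hh1, hh2⟩
  · exact hac hh1
  · exact had hh1

theorem blocker_edge_splits (m : ℕ) (hm : 2 ≤ m)
    (B : Finset (Sym2 (ZMod (2 * m)))) (hB : IsBlocker m B)
    (i j : ℕ) (hij : i < j) (hj : j ≤ 2 * m - 1) (hodd : Odd (j - i))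
    (he : s((i : ZMod (2 * m)), (j : ZMod (2 * m))) ∈ B) :
    {g : Sym2 (ZMod (2 * m)) | g ∈ B ∧ g ≠ s((i : ZMod (2 * m)), (j : ZMod (2 * m))) ∧
        ∀ v ∈ g, ∃ a : ℕ, i ≤ a ∧ a ≤ j ∧ v = (a : ZMod (2 * m))}.ncard
      = (j - i - 1) / 2 ∧
    {g : Sym2 (ZMod (2 * m)) | g ∈ B ∧ g ≠ s((i : ZMod (2 * m)), (j : ZMod (2 * m))) ∧
        ∀ v ∈ g, ∃ a : ℕ, a ≤ 2 * m - 1 ∧ (j ≤ a ∨ a ≤ i) ∧ v = (a : ZMod (2 * m))}.ncard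
      = m - 1 - (j - i - 1) / 2 ∧
    ∀ g ∈ B, ¬ Cross (2 * m) g (s((i : ZMod (2 * m)), (j : ZMod (2 * m)))) := by
  classical
  obtain ⟨q, hq⟩ := hodd
  have hKval : (j - i - 1) / 2 = q := by omega
  set L := m - 1 - q with hLdef
  have hK : j = i + (2*q+1) := by omega
  have hKL : m = q + L + 1 := by omega
  have hnd : ∀ g ∈ B, ¬ Sym2.IsDiag g := fun g hg => hB.1.1 g hg
  have hsumInj : Set.InjOn edgeSum (B : Set (Sym2 (ZMod (2*m)))) := sum_injOn hm B hB
  set e : Sym2 (ZMod (2*m)) := s((i : ZMod (2*m)), (j : ZMod (2*m))) with hedef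
  set IS := {g : Sym2 (ZMod (2*m)) | g ∈ B ∧ g ≠ e ∧
      ∀ v ∈ g, ∃ a : ℕ, i ≤ a ∧ a ≤ j ∧ v = (a : ZMod (2*m))} with hISdef
  set OS := {g : Sym2 (ZMod (2*m)) | g ∈ B ∧ g ≠ e ∧
      ∀ v ∈ g, ∃ a : ℕ, a ≤ 2*m - 1 ∧ (j ≤ a ∨ a ≤ i) ∧ v = (a : ZMod (2*m))} with hOSdef
  have hIfin : IS.Finite := Set.Finite.subset B.finite_toSet (fun g hg => hg.1)
  have hOfin : OS.Finite := Set.Finite.subset B.finite_toSet (fun g hg => hg.1)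
  have hI_ge : q ≤ IS.ncard := ncard_in_ge hm B hB i j q L hij hj hK hKL he hsumInj
  have hO_ge : L ≤ OS.ncard := ncard_out_ge hm B hB i j q L hij hj hK hKL he hsumInj
  have hdisj : Disjoint IS OS := by
    rw [Set.disjoint_left]
    intro g hgI hgO
    obtain ⟨x, y, rfl⟩ := sym2_exists g
    have hxy : ¬ (x = y) := by
      have := hnd _ hgI.1
      rwa [Sym2.mk_isDiag_iff] at this
    have hloc : ∀ z : ZMod (2*m), z ∈ s(x, y) → z = ((i : ℕ) : ZMod (2*m)) ∨ z = ((j : ℕ) : ZMod (2*m)) := by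
      intro z hz
      obtain ⟨a, ha1, ha2, hza⟩ := hgI.2.2 z hz
      obtain ⟨b, hb1, hb2, hzb⟩ := hgO.2.2 z hz
      have hcast : ((a : ℕ) : ZMod (2*m)) = ((b : ℕ) : ZMod (2*m)) := hza.symm.trans hzb
      have hab : a = b := natCastInj (by omega) (by omega) hcast
      have : a = i ∨ a = j := by omega
      rcases this with rfl | rfl
      · exact Or.inl hza
      · exact Or.inr hza
    have hx := hloc x (Sym2.mem_mk_left x y)
    have hy := hloc y (Sym2.mem_mk_right x y)
    rcases hx with rfl | rfl <;> rcases hy with rfl | rfl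
    · exact hxy rfl
    · exact hgI.2.1 rfl
    · exact hgI.2.1 Sym2.eq_swap
    · exact hxy rfl
  have hdiff_eq : ((B : Set (Sym2 (ZMod (2*m)))) \ {e}) = ↑(B.erase e) := by
    rw [Finset.coe_erase]
  have hdiff_fin : ((B : Set (Sym2 (ZMod (2*m)))) \ {e}).Finite := by
    rw [hdiff_eq]; exact (B.erase e).finite_toSet
  have hdiff_card : ((B : Set (Sym2 (ZMod (2*m)))) \ {e}).ncard = m - 1 := by
    rw [hdiff_eq, Set.ncard_coe_finset, Finset.card_erase_of_mem he, hB.2]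
  have hsub : IS ∪ OS ⊆ (B : Set (Sym2 (ZMod (2*m)))) \ {e} := by
    intro g hg
    rcases hg with hg | hg
    · exact ⟨hg.1, by simpa using hg.2.1⟩
    · exact ⟨hg.1, by simpa using hg.2.1⟩
  have hun_card : (IS ∪ OS).ncard = IS.ncard + OS.ncard := Set.ncard_union_eq hdisj hIfin hOfin
  have hle : IS.ncard + OS.ncard ≤ m - 1 := by
    rw [← hun_card, ← hdiff_card]
    exact Set.ncard_le_ncard hsub hdiff_fin
  have hIcard : IS.ncard = q := by omega
  have hOcard : OS.ncard = L := by omega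
  have hseteq : IS ∪ OS = (B : Set (Sym2 (ZMod (2*m)))) \ {e} := by
    apply Set.eq_of_subset_of_ncard_le hsub _ hdiff_fin
    rw [hun_card, hdiff_card]
    omega
  refine ⟨by rw [hKval]; exact hIcard, by rw [hKval]; exact hOcard, ?_⟩
  intro g hg
  by_cases hge : g = e
  · rw [hge]; exact noCross_self (2*m) e
  · have : g ∈ IS ∪ OS := by
      rw [hseteq]
      exact ⟨hg, by simpa using hge⟩
    obtain ⟨x, y, rfl⟩ := sym2_exists g
    rcases this with hgm | hgm
    · exact noCross_in hm i j q hij hj hK x y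
        (hgm.2.2 x (Sym2.mem_mk_left x y)) (hgm.2.2 y (Sym2.mem_mk_right x y))
    · exact noCross_out hm i j q L hij hj hK hKL x y
        (hgm.2.2 x (Sym2.mem_mk_left x y)) (hgm.2.2 y (Sym2.mem_mk_right x y))
end

section
/- Let m ≥ 2, let B be a blocker in CK(2m), and let e = {i, j} ∈ B be a non-boundary edge (i.e., an edge of order at least 2). Then each of the two closed arcs determined by e — the arc {i, i+1, …, j} and the arc {j, j+1, …, i} (indices mod 2m) — contains both endpoints of at least one boundary edge belonging to B. -/
section CKhelpers
variable {n : ℕ} [NeZero n]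

lemma CK.castval (a : ZMod n) : ((a.val : ℕ) : ZMod n) = a := by
  simp [ZMod.natCast_val, ZMod.cast_id]

lemma CK.shift_inj {i : ZMod n} {p q : ℕ} (hp : p < n) (hq : q < n)
    (h : i + (p:ZMod n) = i + q) : p = q := by
  have h2 : (p : ZMod n) = q := add_left_cancel h
  have := congrArg ZMod.val h2
  rwa [ZMod.val_natCast, ZMod.val_natCast, Nat.mod_eq_of_lt hp, Nat.mod_eq_of_lt hq] at this

lemma CK.shift_sub_val {i : ZMod n} {x z : ℕ} (hx : x < n) :
    ((i + (z:ZMod n)) - (i + x)).val = (n + z - x) % n := by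
  have h1 : (i + (z:ZMod n)) - (i + x) = ((n + z - x : ℕ) : ZMod n) := by
    rw [Nat.cast_sub (by omega), Nat.cast_add, ZMod.natCast_self]
    ring
  rw [h1, ZMod.val_natCast]

lemma CK.inArc_shift {i : ZMod n} {x y z : ℕ} (hx : x < n) (hy : y < n) (hz : z < n)
    (hxy : x < y) : inArc n (i + x) (i + y) (i + z) ↔ (x < z ∧ z < y) := by
  unfold inArc
  rw [CK.shift_sub_val hx, CK.shift_sub_val hx]
  have e1 : (n + z - x) % n = if x ≤ z then z - x else n + z - x := by
    rcases le_or_gt x z with h | h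
    · rw [if_pos h]
      have : n + z - x = n + (z - x) := by omega
      rw [this, Nat.add_mod_left, Nat.mod_eq_of_lt (by omega)]
    · rw [if_neg (by omega), Nat.mod_eq_of_lt (by omega)]
  have e2 : (n + y - x) % n = y - x := by
    have : n + y - x = n + (y - x) := by omega
    rw [this, Nat.add_mod_left, Nat.mod_eq_of_lt (by omega)]
  rw [e1, e2]
  split <;> omega

lemma CK.inArc_shift' {i : ZMod n} {x y z : ℕ} (hx : x < n) (hy : y < n) (hz : z < n)
    (hxy : x < y) : inArc n (i + y) (i + x) (i + z) ↔ (z < x ∨ y < z) := by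
  unfold inArc
  rw [CK.shift_sub_val hy, CK.shift_sub_val hy]
  have e2 : (n + x - y) % n = n + x - y := Nat.mod_eq_of_lt (by omega)
  have e1 : (n + z - y) % n = if y ≤ z then z - y else n + z - y := by
    rcases le_or_gt y z with h | h
    · rw [if_pos h]
      have : n + z - y = n + (z - y) := by omega
      rw [this, Nat.add_mod_left, Nat.mod_eq_of_lt (by omega)]
    · rw [if_neg (by omega), Nat.mod_eq_of_lt (by omega)]
  rw [e1, e2]
  split <;> omega

lemma CK.cross_pos {i : ZMod n} {x y z w : ℕ} (hx : x < n) (hy : y < n) (hz : z < n)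
    (hw : w < n) (hxy : x < y) (hzw : z < w)
    (h : Cross n s(i + x, i + y) s(i + z, i + w)) :
    (x < z ∧ z < y ∧ y < w) ∨ (z < x ∧ x < w ∧ w < y) := by
  obtain ⟨a, b, c, d, he, hf, hab, hac, had, hbc, hbd, hcd, hxor⟩ := h
  rw [Sym2.eq_iff] at he hf
  have inj : ∀ u v : ℕ, u < n → v < n → i + (u:ZMod n) ≠ i + (v:ZMod n) → u ≠ v := by
    intro u v hu hv hne hval; exact hne (by rw [hval])
  rcases he with ⟨ha, hb⟩ | ⟨ha, hb⟩ <;> rcases hf with ⟨hc, hd⟩ | ⟨hc, hd⟩ <;>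
      subst ha hb hc hd
  · have h1 := CK.inArc_shift hx hy hz hxy (i := i)
    have h2 := CK.inArc_shift hx hy hw hxy (i := i)
    have nxz := inj _ _ hx hz hac
    have nxw := inj _ _ hx hw had
    have nyz := inj _ _ hy hz hbc
    have nyw := inj _ _ hy hw hbd
    rw [Xor', xor_def] at hxor
    rw [h1, h2] at hxor
    omega
  · have h1 := CK.inArc_shift hx hy hz hxy (i := i)
    have h2 := CK.inArc_shift hx hy hw hxy (i := i)
    have nxz := inj _ _ hx hz had
    have nxw := inj _ _ hx hw hac
    have nyz := inj _ _ hy hz hbd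
    have nyw := inj _ _ hy hw hbc
    rw [Xor', xor_def] at hxor
    rw [h1, h2] at hxor
    omega
  · have h1 := CK.inArc_shift' hx hy hz hxy (i := i)
    have h2 := CK.inArc_shift' hx hy hw hxy (i := i)
    have nxz := inj _ _ hx hz hbc
    have nxw := inj _ _ hx hw hbd
    have nyz := inj _ _ hy hz hac
    have nyw := inj _ _ hy hw had
    rw [Xor', xor_def] at hxor
    rw [h1, h2] at hxor
    omega
  · have h1 := CK.inArc_shift' hx hy hz hxy (i := i)
    have h2 := CK.inArc_shift' hx hy hw hxy (i := i)
    have nxz := inj _ _ hx hz hbd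
    have nxw := inj _ _ hx hw hbc
    have nyz := inj _ _ hy hz had
    have nyw := inj _ _ hy hw hac
    rw [Xor', xor_def] at hxor
    rw [h1, h2] at hxor
    omega

lemma CK.edgeSum_mk (a b : ZMod n) : edgeSum s(a,b) = a + b := rfl

open Finset in
lemma CK.two_mul_card (M : Finset (Sym2 (ZMod n))) (hd : ∀ e ∈ M, ¬ e.IsDiag)
    (hu : ∀ v : ZMod n, ∃! e, e ∈ M ∧ v ∈ e) : 2 * M.card = n := by
  classical
  have hcov : (Finset.univ : Finset (ZMod n)) = M.biUnion (fun e => Finset.univ.filter (· ∈ e)) := by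
    ext v
    simp only [mem_univ, true_iff, mem_biUnion, mem_filter]
    obtain ⟨e, ⟨heM, hve⟩, -⟩ := hu v
    exact ⟨e, heM, trivial, hve⟩
  have hdisj : ∀ e ∈ M, ∀ f ∈ M, e ≠ f →
      Disjoint (Finset.univ.filter (· ∈ e)) (Finset.univ.filter (· ∈ f)) := by
    intro e heM f hfM hef
    rw [Finset.disjoint_left]
    intro v hv hv2
    simp only [mem_filter] at hv hv2
    obtain ⟨g, -, hg⟩ := hu v
    exact hef ((hg e ⟨heM, hv.2⟩).trans (hg f ⟨hfM, hv2.2⟩).symm)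
  have hcard2 : ∀ e ∈ M, (Finset.univ.filter (· ∈ e)).card = 2 := by
    intro e heM
    induction e using Sym2.inductionOn with
    | hf a b =>
      have hab : a ≠ b := by simpa [Sym2.isDiag_iff_proj_eq] using hd _ heM
      have : Finset.univ.filter (· ∈ s(a,b)) = {a, b} := by
        ext v; simp [Sym2.mem_iff]
      rw [this, card_insert_of_notMem (by simpa using hab), card_singleton]
  have := congrArg Finset.card hcov
  rw [card_univ, ZMod.card, card_biUnion hdisj, Finset.sum_congr rfl hcard2,
    Finset.sum_const, smul_eq_mul] at this
  omega

lemma CK.mod_eq_cases {s r : ℕ} (hn : 0 < n) (h : s % n = r) (hs : s < 2 * n) :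
    s = r ∨ s = n + r := by
  rcases le_or_gt n s with h1 | h1
  · right
    have h2 : s % n = s - n := by
      rw [Nat.mod_eq_sub_mod h1, Nat.mod_eq_of_lt (by omega)]
    omega
  · left
    rw [Nat.mod_eq_of_lt h1] at h
    omega

end CKhelpers

def pclass (n : ℕ) [NeZero n] (c : ZMod n) : Finset (Sym2 (ZMod n)) :=
  Finset.univ.image (fun a => s(a, c - a))

lemma mem_pclass {n : ℕ} [NeZero n] {c : ZMod n} {e : Sym2 (ZMod n)} :
    e ∈ pclass n c ↔ edgeSum e = c := by
  constructor
  · rintro he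
    simp only [pclass, Finset.mem_image] at he
    obtain ⟨a, -, rfl⟩ := he
    simp [CK.edgeSum_mk]
  · intro he
    induction e using Sym2.inductionOn with
    | hf a b =>
      rw [CK.edgeSum_mk] at he
      simp only [pclass, Finset.mem_image]
      exact ⟨a, Finset.mem_univ a, by rw [← he]; ring_nf⟩

section parity
variable {m : ℕ}

lemma CK.parity_val_add (hm : 1 ≤ m) (a b : ZMod (2*m)) :
    (a + b).val % 2 = (a.val + b.val) % 2 := by
  haveI : NeZero (2*m) := ⟨by omega⟩
  rw [ZMod.val_add, Nat.mod_mod_of_dvd _ ⟨m, rfl⟩]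

lemma CK.double_even (hm : 1 ≤ m) (a : ZMod (2*m)) : (a + a).val % 2 = 0 := by
  rw [CK.parity_val_add hm]; omega

lemma pclass_spm (m : ℕ) [NeZero (2*m)] (hm : 2 ≤ m) (c : ZMod (2*m)) (hc : c.val % 2 = 1) :
    IsSPM m (pclass (2*m) c) := by
  have hnodiag : ∀ e ∈ pclass (2*m) c, ¬ e.IsDiag := by
    intro e he
    simp only [pclass, Finset.mem_image] at he
    obtain ⟨a, -, rfl⟩ := he
    rw [Sym2.isDiag_iff_proj_eq]
    intro hdiag
    have h2 : a + a = c := eq_sub_iff_add_eq.mp hdiag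
    have h3 := CK.double_even (m := m) (by omega) a
    rw [h2] at h3
    omega
  have hcover : ∀ v : ZMod (2*m), ∃! e, e ∈ pclass (2*m) c ∧ v ∈ e := by
    intro v
    refine ⟨s(v, c - v), ⟨?_, Sym2.mem_mk_left _ _⟩, ?_⟩
    · rw [mem_pclass, CK.edgeSum_mk]; ring
    · rintro e ⟨he, hve⟩
      simp only [pclass, Finset.mem_image] at he
      obtain ⟨a, -, rfl⟩ := he
      rw [Sym2.mem_iff] at hve
      rcases hve with rfl | hv
      · rfl
      · have : a = c - v := by rw [hv]; ring
        subst this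
        rw [Sym2.eq_swap]
        congr 1
        ring
  refine ⟨?_, hnodiag, hcover, ?_⟩
  · have := CK.two_mul_card _ hnodiag hcover
    omega
  · intro e he f hf hcross
    simp only [pclass, Finset.mem_image] at he hf
    obtain ⟨a, -, rfl⟩ := he
    obtain ⟨b, -, rfl⟩ := hf
    have hNpos : 0 < 2*m := by omega
    -- positions
    have hsum1 : (a.val + (c-a).val) % (2*m) = c.val := by
      rw [← ZMod.val_add]; congr 1; ring
    have hsum2 : (b.val + (c-b).val) % (2*m) = c.val := by
      rw [← ZMod.val_add]; congr 1; ring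
    have hform : ∀ a : ZMod (2*m), ∃ x y : ℕ, x < y ∧ x + y = a.val + (c-a).val ∧
        x < 2*m ∧ y < 2*m ∧ s(a, c - a) = s((0:ZMod (2*m)) + (x:ℕ), (0:ZMod (2*m)) + (y:ℕ)) := by
      intro a
      have hne1 : a ≠ c - a := by
        intro h
        apply hnodiag s(a, c - a)
        · simp only [pclass, Finset.mem_image]
          exact ⟨a, Finset.mem_univ a, rfl⟩
        · rw [← h]
          simp [Sym2.isDiag_iff_proj_eq]
      have hvne : a.val ≠ (c - a).val := by
        intro h
        apply hne1
        have h2 := congrArg (fun t : ℕ => (t : ZMod (2*m))) h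
        rwa [CK.castval, CK.castval] at h2
      have hrw : s(a, c - a) = s((0:ZMod (2*m)) + (a.val:ℕ), (0:ZMod (2*m)) + ((c-a).val:ℕ)) := by
        rw [zero_add, zero_add, CK.castval, CK.castval]
      rcases lt_or_gt_of_ne hvne with h | h
      · exact ⟨a.val, (c-a).val, h, rfl, ZMod.val_lt a, ZMod.val_lt (c-a), hrw⟩
      · exact ⟨(c-a).val, a.val, h, by omega, ZMod.val_lt (c-a), ZMod.val_lt a,
          hrw.trans (Sym2.eq_swap)⟩
    obtain ⟨x, y, hxy, hxysum, hxN, hyN, hex⟩ := hform a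
    obtain ⟨z, w, hzw, hzwsum, hzN, hwN, hfx⟩ := hform b
    rw [hex, hfx] at hcross
    have hpos := CK.cross_pos hxN hyN hzN hwN hxy hzw hcross
    rw [← hxysum] at hsum1
    rw [← hzwsum] at hsum2
    have hcval : c.val < 2*m := ZMod.val_lt c
    have h1 := CK.mod_eq_cases hNpos hsum1 (by omega)
    have h2 := CK.mod_eq_cases hNpos hsum2 (by omega)
    omega

open Finset in
lemma blocker_structure (m : ℕ) [NeZero (2*m)] (hm : 2 ≤ m)
    (B : Finset (Sym2 (ZMod (2*m)))) (hB : IsBlocker m B) :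
    (∀ b ∈ B, (edgeSum b).val % 2 = 1) ∧
    (∀ b ∈ B, ∀ b' ∈ B, edgeSum b = edgeSum b' → b = b') := by
  classical
  set C : Finset (ZMod (2*m)) := (Finset.range m).image (fun t => ((2*t+1 : ℕ) : ZMod (2*m))) with hC
  have hCval : ∀ c ∈ C, c.val % 2 = 1 := by
    intro c hc
    simp only [hC, Finset.mem_image, Finset.mem_range] at hc
    obtain ⟨t, ht, rfl⟩ := hc
    rw [ZMod.val_cast_of_lt (by omega : 2*t+1 < 2*m)]
    omega
  have hCcard : C.card = m := by
    rw [hC, Finset.card_image_of_injOn, Finset.card_range]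
    intro t ht u hu h
    simp only [Finset.coe_range, Set.mem_Iio] at ht hu
    have := congrArg ZMod.val h
    rw [ZMod.val_cast_of_lt (by omega : 2*t+1 < 2*m),
      ZMod.val_cast_of_lt (by omega : 2*u+1 < 2*m)] at this
    omega
  set f : ZMod (2*m) → Finset (Sym2 (ZMod (2*m))) :=
    fun c => B.filter (fun e => edgeSum e = c) with hf
  have hne : ∀ c ∈ C, 1 ≤ (f c).card := by
    intro c hcC
    obtain ⟨e, heM, heB⟩ := hB.1.2 (pclass (2*m) c) (pclass_spm m hm c (hCval c hcC))
    have : e ∈ f c := Finset.mem_filter.mpr ⟨Finset.mem_coe.mp heB, mem_pclass.mp heM⟩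
    exact Finset.card_pos.mpr ⟨e, this⟩
  have hdisj : ∀ x ∈ C, ∀ y ∈ C, x ≠ y → Disjoint (f x) (f y) := by
    intro x hx y hy hxy
    rw [Finset.disjoint_left]
    intro e he1 he2
    simp only [hf, Finset.mem_filter] at he1 he2
    exact hxy (he1.2 ▸ he2.2 ▸ rfl)
  have hsub : C.biUnion f ⊆ B := Finset.biUnion_subset.mpr fun c _ => Finset.filter_subset _ _
  have hcardU : (C.biUnion f).card = ∑ c ∈ C, (f c).card := Finset.card_biUnion hdisj
  have hge : m ≤ ∑ c ∈ C, (f c).card := by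
    calc m = ∑ _c ∈ C, 1 := by rw [Finset.sum_const, hCcard, smul_eq_mul, mul_one]
    _ ≤ ∑ c ∈ C, (f c).card := Finset.sum_le_sum hne
  have hBm : B.card = m := hB.2
  have hle : ∑ c ∈ C, (f c).card ≤ m := by
    have h1 := Finset.card_le_card hsub
    omega
  have hEq : C.biUnion f = B := Finset.eq_of_subset_of_card_le hsub (by omega)
  have hone : ∀ c ∈ C, (f c).card = 1 := by
    by_contra hcon
    push_neg at hcon
    obtain ⟨c0, hc0, hc0ne⟩ := hcon
    have : ∑ _c ∈ C, 1 < ∑ c ∈ C, (f c).card :=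
      Finset.sum_lt_sum hne ⟨c0, hc0, by have := hne c0 hc0; omega⟩
    rw [Finset.sum_const, hCcard, smul_eq_mul, mul_one] at this
    omega
  constructor
  · intro b hb
    have hbU : b ∈ C.biUnion f := hEq ▸ hb
    obtain ⟨c, hcC, hbf⟩ := Finset.mem_biUnion.mp hbU
    rw [(Finset.mem_filter.mp hbf).2]
    exact hCval c hcC
  · intro b hb b' hb' hsum
    have hbU : b ∈ C.biUnion f := hEq ▸ hb
    obtain ⟨c, hcC, hbf⟩ := Finset.mem_biUnion.mp hbU
    have hbc : edgeSum b = c := (Finset.mem_filter.mp hbf).2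
    have hb'f : b' ∈ f c := Finset.mem_filter.mpr ⟨hb', hsum ▸ hbc⟩
    exact Finset.card_le_one.mp (le_of_eq (hone c hcC)) b hbf b' hb'f

open Finset in
lemma arc_boundary (m : ℕ) [NeZero (2*m)] (hm : 2 ≤ m)
    (B : Finset (Sym2 (ZMod (2*m)))) (hB : IsBlocker m B)
    (i j : ZMod (2*m)) (he : s(i,j) ∈ B) (hord : 2 ≤ edgeOrder s(i,j)) :
    ∃ b ∈ B, IsBoundaryEdge m b ∧ ∀ v ∈ b, (v - i).val ≤ (j - i).val := by
  classical
  obtain ⟨hodd, huniq⟩ := blocker_structure m hm B hB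
  have hij_odd : (i + j).val % 2 = 1 := hodd _ he
  have hordmin : 2 ≤ min ((i-j).val) ((j-i).val) := hord
  have hk2 : 2 ≤ (j - i).val := le_trans hordmin (min_le_right _ _)
  have hk2' : 2 ≤ (i - j).val := le_trans hordmin (min_le_left _ _)
  have hine : j - i ≠ 0 := by
    intro h
    rw [h] at hk2
    simp at hk2
  have hvalneg : (i - j).val = 2*m - (j - i).val := by
    have h1 : i - j = -(j - i) := by ring
    rw [h1, ZMod.neg_val, if_neg hine]
  have hkodd : (j - i).val % 2 = 1 := by
    have h1 : (j - i) + (i + i) = i + j := by ring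
    have h2 := CK.parity_val_add (m := m) (by omega) (j - i) (i + i)
    rw [h1] at h2
    have h3 := CK.double_even (m := m) (by omega) i
    omega
  have hklt : (j - i).val < 2*m := ZMod.val_lt _
  set k := (j - i).val with hkdef
  have hk3 : 3 ≤ k := by omega
  have hkle : k ≤ 2*m - 3 := by omega
  have hj : j = i + (k : ℕ) := by
    rw [hkdef, CK.castval]
    ring
  by_contra hcon
  push_neg at hcon
  -- the shifted-position family
  set S : Finset (ℕ × ℕ) :=
    (Finset.range ((k+1)/2)).image (fun s => (2*s, 2*s+1)) ∪
    (Finset.range ((2*m-k-1)/2)).image (fun s => (k+1+s, 2*m-1-s)) with hS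
  have hSmem : ∀ p : ℕ × ℕ, p ∈ S ↔
      ((p.2 = p.1 + 1 ∧ p.1 % 2 = 0 ∧ p.1 < k) ∨
       (p.1 + p.2 = 2*m + k ∧ k < p.1 ∧ p.1 < p.2)) := by
    intro p
    simp only [hS, Finset.mem_union, Finset.mem_image, Finset.mem_range, Prod.ext_iff]
    constructor
    · rintro (⟨s, hs, h1, h2⟩ | ⟨s, hs, h1, h2⟩)
      · left; omega
      · right; omega
    · rintro (⟨h1, h2, h3⟩ | ⟨h1, h2, h3⟩)
      · exact Or.inl ⟨p.1 / 2, by omega, by omega, by omega⟩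
      · exact Or.inr ⟨p.1 - k - 1, by omega, by omega, by omega⟩
  have hbound : ∀ p ∈ S, p.1 < p.2 ∧ p.2 < 2*m := by
    intro p hp
    rw [hSmem] at hp
    omega
  set M : Finset (Sym2 (ZMod (2*m))) :=
    S.image (fun p => s(i + (p.1 : ℕ), i + (p.2 : ℕ))) with hM
  have hshiftval : ∀ x : ℕ, x < 2*m → ((i + (x:ℕ)) - i).val = x := by
    intro x hx
    rw [add_sub_cancel_left, ZMod.val_natCast, Nat.mod_eq_of_lt hx]
  have hSinj : ∀ q ∈ S, ∀ r ∈ S,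
      (q.1 = r.1 ∨ q.1 = r.2 ∨ q.2 = r.1 ∨ q.2 = r.2) → q = r := by
    intro q hq r hr hshare
    rw [hSmem] at hq hr
    rw [Prod.ext_iff]
    omega
  have hnodiag : ∀ e ∈ M, ¬ e.IsDiag := by
    intro e heM
    obtain ⟨q, hqS, rfl⟩ := Finset.mem_image.mp heM
    obtain ⟨hq1, hq2⟩ := hbound q hqS
    rw [Sym2.isDiag_iff_proj_eq]
    intro hdiag
    have := CK.shift_inj (by omega) (by omega) hdiag
    omega
  have hcover : ∀ v : ZMod (2*m), ∃! e, e ∈ M ∧ v ∈ e := by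
    intro v
    have hplt : (v - i).val < 2*m := ZMod.val_lt _
    have hv : v = i + (((v - i).val : ℕ) : ZMod (2*m)) := by
      rw [CK.castval]; ring
    set p := (v - i).val with hp
    have key : ∃ x y : ℕ, (x, y) ∈ S ∧ (p = x ∨ p = y) := by
      rcases le_or_gt p k with hple | hpgt
      · exact ⟨2*(p/2), 2*(p/2)+1, (hSmem _).mpr (Or.inl ⟨rfl, by omega, by omega⟩), by omega⟩
      · exact ⟨min p (2*m+k-p), max p (2*m+k-p),
          (hSmem _).mpr (Or.inr ⟨by omega, by omega, by omega⟩), by omega⟩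
    obtain ⟨x, y, hxyS, hpxy⟩ := key
    have hbd := hbound _ hxyS
    simp only at hbd
    refine ⟨s(i + (x:ℕ), i + (y:ℕ)), ⟨Finset.mem_image.mpr ⟨(x,y), hxyS, rfl⟩, ?_⟩, ?_⟩
    · rcases hpxy with h | h
      · rw [hv, h]; exact Sym2.mem_mk_left _ _
      · rw [hv, h]; exact Sym2.mem_mk_right _ _
    · rintro e' ⟨he'M, hve'⟩
      obtain ⟨q, hqS, rfl⟩ := Finset.mem_image.mp he'M
      obtain ⟨hq1, hq2⟩ := hbound q hqS
      rw [Sym2.mem_iff] at hve'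
      have hpq : p = q.1 ∨ p = q.2 := by
        rcases hve' with h | h
        · left; exact CK.shift_inj hplt (by omega) (hv ▸ h)
        · right; exact CK.shift_inj hplt (by omega) (hv ▸ h)
      have : q = (x, y) := hSinj q hqS (x,y) hxyS (by simp only; omega)
      rw [this]
  have hcard : M.card = m := by
    have := CK.two_mul_card M hnodiag hcover
    omega
  have hnocross : ∀ e ∈ M, ∀ f ∈ M, ¬ Cross (2*m) e f := by
    intro e heM f hfM hcross
    obtain ⟨q, hqS, rfl⟩ := Finset.mem_image.mp heM
    obtain ⟨r, hrS, rfl⟩ := Finset.mem_image.mp hfM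
    obtain ⟨hq1, hq2⟩ := hbound q hqS
    obtain ⟨hr1, hr2⟩ := hbound r hrS
    have hpos := CK.cross_pos (by omega) hq2 (by omega) hr2 hq1 hr1 hcross
    rw [hSmem] at hqS hrS
    omega
  have hMB : ∀ e ∈ M, e ∉ B := by
    intro e heM heB
    obtain ⟨q, hqS, rfl⟩ := Finset.mem_image.mp heM
    obtain ⟨hq1, hq2⟩ := hbound q hqS
    rw [hSmem] at hqS
    rcases hqS with ⟨h1, h2, h3⟩ | ⟨h1, h2, h3⟩
    · -- boundary edge inside the arc: contradicts hcon
      have hbd : IsBoundaryEdge m s(i + (q.1 : ℕ), i + (q.2 : ℕ)) := by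
        refine ⟨i + (q.1 : ℕ), ?_⟩
        rw [h1]
        push_cast
        ring_nf
      obtain ⟨v, hvmem, hvgt⟩ := hcon _ heB hbd
      rw [Sym2.mem_iff] at hvmem
      rcases hvmem with rfl | rfl
      · rw [hshiftval q.1 (by omega)] at hvgt
        omega
      · rw [hshiftval q.2 (by omega)] at hvgt
        omega
    · -- onion edge: same class as s(i,j), so it equals s(i,j): contradiction
      have hsum : edgeSum s(i + ((q.1 : ℕ) : ZMod (2*m)), i + ((q.2 : ℕ) : ZMod (2*m))) = edgeSum s(i, j) := by
        rw [CK.edgeSum_mk, CK.edgeSum_mk, hj]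
        have hcast : ((q.1 : ℕ) : ZMod (2*m)) + ((q.2 : ℕ) : ZMod (2*m)) = ((k : ℕ) : ZMod (2*m)) := by
          rw [← Nat.cast_add, h1, Nat.cast_add, ZMod.natCast_self, zero_add]
        calc (i + ((q.1:ℕ) : ZMod (2*m))) + (i + ((q.2:ℕ) : ZMod (2*m)))
            = i + i + (((q.1:ℕ):ZMod (2*m)) + ((q.2:ℕ):ZMod (2*m))) := by ring
        _ = i + (i + (k:ℕ)) := by rw [hcast]; ring
      have heq := huniq _ heB _ he hsum
      have himem : i ∈ s(i + ((q.1 : ℕ) : ZMod (2*m)), i + ((q.2 : ℕ) : ZMod (2*m))) := by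
        rw [heq]
        exact Sym2.mem_mk_left _ _
      rw [Sym2.mem_iff] at himem
      have hi0 : i = i + ((0 : ℕ) : ZMod (2*m)) := by simp
      rcases himem with h | h
      · have := CK.shift_inj (by omega : (0:ℕ) < 2*m) (by omega : q.1 < 2*m) (hi0.symm.trans h)
        omega
      · have := CK.shift_inj (by omega : (0:ℕ) < 2*m) (by omega : q.2 < 2*m) (hi0.symm.trans h)
        omega
  obtain ⟨e, heM, heB⟩ := hB.1.2 M ⟨hcard, hnodiag, hcover, hnocross⟩
  exact hMB e heM heB

theorem interior_edge_arcs_contain_boundary_edges (m : ℕ) (hm : 2 ≤ m)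
    (B : Finset (Sym2 (ZMod (2 * m)))) (hB : IsBlocker m B)
    (i j : ZMod (2 * m)) (he : s(i, j) ∈ B) (hord : 2 ≤ edgeOrder s(i, j)) :
    (∃ b ∈ B, IsBoundaryEdge m b ∧ ∀ v ∈ b, (v - i).val ≤ (j - i).val) ∧
    (∃ b ∈ B, IsBoundaryEdge m b ∧ ∀ v ∈ b, (v - j).val ≤ (i - j).val) := by
  haveI : NeZero (2*m) := ⟨by omega⟩
  constructor
  · exact arc_boundary m hm B hB i j he hord
  · have he' : s(j, i) ∈ B := by rwa [Sym2.eq_swap]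
    have hord' : 2 ≤ edgeOrder s(j, i) := by rwa [Sym2.eq_swap]
    exact arc_boundary m hm B hB j i he' hord'
end parity
end
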